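/- Let P ⊆ S^{N−1} be a finite root system in ℝ^N (N ≥ 1) satisfying condition (EA), let ρ ≥ 0 and r > 0, and let Ω ⊆ ℝ^N be an open set satisfying the reflection property (RP) with respect to P and ρ that contains the open ball 𝔅_r of radius σ1(P)⁻¹σ2(P)(ρ + 2r) about the origin. Then Ω has (r, σ3(P)^N)-uniform density: for every x ∈ ∂Ω and every s ∈ (0, r), σ3(P)^N ≤ λ(B(x, s) ∩ Ω)/λ(B(x, s)) ≤ 1 − σ3(P)^N, where λ denotes Lebesgue measure on ℝ^N. -/

import Mathlib

open scoped RealInnerProductSpace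
open Metric Set MeasureTheory

noncomputable section

abbrev E (N : ℕ) := EuclideanSpace ℝ (Fin N)

variable {N : ℕ}

/-- Reflection across the hyperplane `Π_p(s) = {x | x·p = s}`. -/
def reflect (p : E N) (s : ℝ) (x : E N) : E N := x - (2 * (⟪x, p⟫ - s)) • p

/-- Reflection across the hyperplane through the origin orthogonal to `p`. -/
def reflect0 (p : E N) : E N → E N := reflect p 0

/-- A finite root system of unit vectors. -/
def IsRootSystem (P : Set (E N)) : Prop :=
  P.Finite ∧ (∀ p ∈ P, ‖p‖ = 1) ∧
  (∀ p ∈ P, {q | q ∈ P ∧ ∃ c : ℝ, q = c • p} = {p, -p}) ∧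
  (∀ p ∈ P, reflect0 p '' P = P)

/-- Condition (EA): for every hyperplane through the origin (with normal `v ≠ 0`),
the part of `P` outside the hyperplane spans `ℝ^N`. -/
def CondEA (P : Set (E N)) : Prop :=
  ∀ v : E N, v ≠ 0 → Submodule.span ℝ {p | p ∈ P ∧ ⟪p, v⟫ ≠ 0} = ⊤

/-- The reflection property (RP) with respect to `P` and `ρ`. -/
def ReflProp (P : Set (E N)) (ρ : ℝ) (Ω : Set (E N)) : Prop :=
  ∀ p ∈ P, ∀ s > ρ,
    reflect p s '' Ω ∩ {x | ⟪x, p⟫ < s} ⊆ Ω ∩ {x | ⟪x, p⟫ < s}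

/-- `v` enumerates a basis of `ℝ^N` consisting of elements of `P`. -/
def BasisIn (P : Set (E N)) (v : Fin N → E N) : Prop :=
  (∀ i, v i ∈ P) ∧ LinearIndependent ℝ v ∧ Submodule.span ℝ (Set.range v) = ⊤

/-- The open cone `Co_r(A)` generated by a basis. -/
def Cone (r : ℝ) (v : Fin N → E N) : Set (E N) :=
  {x | ∃ a : Fin N → ℝ, (∀ i, 0 < a i) ∧ (∑ i, a i) < r ∧ x = ∑ i, a i • v i}

/-- `σ₁(P)`. -/
def sigma1 (P : Set (E N)) : ℝ :=
  sInf {s | ∃ p₁ ∈ P, s = sSup {t | ∃ v : Fin N → E N, BasisIn P v ∧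
    t = sInf (Set.range fun i => |⟪v i, p₁⟫|)}}

/-- `σ₂(P)`. -/
def sigma2 (P : Set (E N)) : ℝ :=
  sSup {t | ∃ x : E N, (∀ p ∈ P, |⟪p, x⟫| ≤ 1) ∧ t = ‖x‖}

/-- `σ₃(P)`. -/
def sigma3 (P : Set (E N)) : ℝ :=
  sInf {s | ∃ v : Fin N → E N, BasisIn P v ∧
    s = sSup {r | 0 < r ∧ ball ((1 / (2 * (N : ℝ))) • ∑ i, v i) r ⊆ Cone 1 v}}

variable {P : Set (E N)}

lemma RS.neg_mem (hP : IsRootSystem P) {p : E N} (hp : p ∈ P) : -p ∈ P := by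
  have h := hP.2.2.1 p hp
  have : -p ∈ ({p, -p} : Set (E N)) := by simp
  rw [← h] at this
  exact this.1

lemma RS.reflect_mem (hP : IsRootSystem P) {p q : E N} (hp : p ∈ P) (hq : q ∈ P) :
    q - (2 * ⟪q, p⟫) • p ∈ P := by
  have h := hP.2.2.2 p hp
  have : reflect0 p q ∈ reflect0 p '' P := Set.mem_image_of_mem _ hq
  rw [h] at this
  simpa [reflect0, reflect] using this

lemma RS.reflect_neg_mem (hP : IsRootSystem P) {p q : E N} (hp : p ∈ P) (hq : q ∈ P) :
    (2 * ⟪q, p⟫) • p - q ∈ P := by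
  have := RS.neg_mem hP (RS.reflect_mem hP hp hq)
  rwa [neg_sub] at this

lemma exists_basisIn_subset {T : Set (E N)} (hsub : T ⊆ P)
    (hspan : Submodule.span ℝ T = ⊤) :
    ∃ v : Fin N → E N, BasisIn P v ∧ ∀ i, v i ∈ T := by
  obtain ⟨b, hbT, hbspan, hbli⟩ := exists_linearIndependent ℝ T
  have hfin : b.Finite := hbli.setFinite
  haveI := hfin.fintype
  have hspan' : Submodule.span ℝ (Set.range (Subtype.val : b → E N)) = ⊤ := by
    rw [Subtype.range_coe, hbspan, hspan]
  have hcard : Fintype.card b = N := by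
    have h1 := Module.finrank_eq_card_basis (Module.Basis.mk hbli (le_of_eq hspan'.symm))
    rw [finrank_euclideanSpace_fin] at h1
    rw [← h1]
  let e := Fintype.equivFinOfCardEq hcard
  refine ⟨fun i => ((e.symm i : b) : E N), ⟨?_, ?_, ?_⟩, ?_⟩
  · intro i; exact hsub (hbT (e.symm i).2)
  · exact hbli.comp e.symm e.symm.injective
  · have : Set.range (fun i => ((e.symm i : b) : E N)) = b := by
      rw [show (fun i => ((e.symm i : b) : E N)) = Subtype.val ∘ e.symm from rfl,
        Set.range_comp, Equiv.range_eq_univ, Set.image_univ, Subtype.range_coe]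
    rw [this, hbspan, hspan]
  · intro i; exact hbT (e.symm i).2

lemma span_P_top (hEA : CondEA P) (hN : 1 ≤ N) : Submodule.span ℝ P = ⊤ := by
  haveI : Nonempty (Fin N) := ⟨⟨0, hN⟩⟩
  have hne : (EuclideanSpace.single (⟨0, hN⟩ : Fin N) (1:ℝ)) ≠ 0 := by
    intro h
    have := congrArg (fun f : E N => f ⟨0, hN⟩) h
    simp [EuclideanSpace.single_apply] at this
  have h := hEA _ hne
  refine top_unique ?_
  rw [← h]
  exact Submodule.span_mono (fun p hp => hp.1)

-- σ₁ and σ₂ machinery (appended to part1 later)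
variable {N : ℕ} {P : Set (E N)}

def Fp (P : Set (E N)) (p : E N) : ℝ :=
  sSup {t | ∃ v : Fin N → E N, BasisIn P v ∧ t = sInf (Set.range fun i => |⟪v i, p⟫|)}

lemma basisIn_finite (hPf : P.Finite) : {v : Fin N → E N | BasisIn P v}.Finite := by
  have h : {v : Fin N → E N | BasisIn P v} ⊆ Set.pi Set.univ (fun _ => P) :=
    fun v hv i _ => hv.1 i
  exact (Set.Finite.pi (fun _ => hPf)).subset h

lemma Tp_eq (p : E N) :
    {t | ∃ v : Fin N → E N, BasisIn P v ∧ t = sInf (Set.range fun i => |⟪v i, p⟫|)}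
      = (fun v : Fin N → E N => sInf (Set.range fun i => |⟪v i, p⟫|)) '' {v | BasisIn P v} := by
  ext t
  simp only [Set.mem_image, Set.mem_setOf_eq]
  constructor
  · rintro ⟨v, hv, rfl⟩; exact ⟨v, hv, rfl⟩
  · rintro ⟨v, hv, rfl⟩; exact ⟨v, hv, rfl⟩

lemma Tp_finite (hPf : P.Finite) (p : E N) :
    {t | ∃ v : Fin N → E N, BasisIn P v ∧ t = sInf (Set.range fun i => |⟪v i, p⟫|)}.Finite := by
  rw [Tp_eq]; exact (basisIn_finite hPf).image _

lemma sigma1_eq_Fp : sigma1 P = sInf {s | ∃ p₁ ∈ P, s = Fp P p₁} := rfl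

lemma sigma1_facts (hN : 1 ≤ N) (hP : IsRootSystem P) (hEA : CondEA P) :
    0 < sigma1 P ∧ sigma1 P ≤ 1 ∧
      ∀ p ∈ P, ∃ w : Fin N → E N, BasisIn P w ∧ ∀ i, sigma1 P ≤ |⟪w i, p⟫| := by
  haveI : Nonempty (Fin N) := ⟨⟨0, hN⟩⟩
  have hPf := hP.1
  have hspan := span_P_top hEA hN
  obtain ⟨v₀, hv₀, _⟩ := exists_basisIn_subset (subset_refl P) hspan
  -- facts about Fp p for p ∈ P
  have hFp : ∀ p ∈ P, (0 < Fp P p ∧ Fp P p ≤ 1) ∧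
      ∃ w : Fin N → E N, BasisIn P w ∧ ∀ i, Fp P p ≤ |⟪w i, p⟫| := by
    intro p hp
    have hTfin := Tp_finite (P := P) hPf p
    have hTne : {t | ∃ v : Fin N → E N, BasisIn P v ∧
        t = sInf (Set.range fun i => |⟪v i, p⟫|)}.Nonempty := ⟨_, v₀, hv₀, rfl⟩
    have hmem := hTne.csSup_mem hTfin
    obtain ⟨w, hw, hweq⟩ := hmem
    have hwle : ∀ i, Fp P p ≤ |⟪w i, p⟫| := by
      intro i
      rw [Fp, hweq]
      exact csInf_le (Set.finite_range _).bddBelow ⟨i, rfl⟩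
    refine ⟨⟨?_, ?_⟩, w, hw, hwle⟩
    · -- positivity via (EA)
      have hpne : p ≠ 0 := by
        intro h
        have := hP.2.1 p hp
        rw [h, norm_zero] at this
        norm_num at this
      obtain ⟨w', hw', hw'mem⟩ := exists_basisIn_subset
        (fun q (hq : q ∈ P ∧ ⟪q, p⟫ ≠ 0) => hq.1) (hEA p hpne)
      set t₀ := sInf (Set.range fun i => |⟪w' i, p⟫|) with ht₀
      obtain ⟨i₀, hi₀⟩ := (Set.range_nonempty _).csInf_mem (Set.finite_range
        (fun i => |⟪w' i, p⟫|))
      have h1 : 0 < t₀ := by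
        have h0 : (0:ℝ) < |⟪w' i₀, p⟫| := abs_pos.mpr (hw'mem i₀).2
        calc (0:ℝ) < |⟪w' i₀, p⟫| := h0
          _ = t₀ := hi₀
      have h2 : t₀ ≤ Fp P p := le_csSup hTfin.bddAbove ⟨w', hw', rfl⟩
      linarith
    · -- ≤ 1
      refine csSup_le hTne ?_
      rintro t ⟨v, hv, rfl⟩
      have h1 : sInf (Set.range fun i => |⟪v i, p⟫|) ≤ |⟪v ⟨0, hN⟩, p⟫| := by
        exact csInf_le (Set.finite_range _).bddBelow ⟨⟨0, hN⟩, rfl⟩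
      have h2 : |⟪v ⟨0, hN⟩, p⟫| ≤ 1 := by
        have := abs_real_inner_le_norm (v ⟨0, hN⟩) p
        rw [hP.2.1 _ (hv.1 _), hP.2.1 _ hp] at this
        simpa using this
      linarith
  -- now σ1
  have hPne : P.Nonempty := ⟨v₀ ⟨0, hN⟩, hv₀.1 _⟩
  have hGeq : {s | ∃ p₁ ∈ P, s = Fp P p₁} = Fp P '' P := by
    ext t; simp only [Set.mem_image, Set.mem_setOf_eq]
    constructor
    · rintro ⟨p, hp, rfl⟩; exact ⟨p, hp, rfl⟩
    · rintro ⟨p, hp, rfl⟩; exact ⟨p, hp, rfl⟩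
  have hGfin : {s | ∃ p₁ ∈ P, s = Fp P p₁}.Finite := by
    rw [hGeq]; exact hPf.image _
  have hGne : {s | ∃ p₁ ∈ P, s = Fp P p₁}.Nonempty := ⟨_, hPne.choose, hPne.choose_spec, rfl⟩
  have hmem := hGne.csInf_mem hGfin
  obtain ⟨p₀, hp₀, hp₀eq⟩ := hmem
  have h1 : 0 < sigma1 P := by rw [sigma1_eq_Fp, hp₀eq]; exact (hFp p₀ hp₀).1.1
  have h2 : sigma1 P ≤ 1 := by rw [sigma1_eq_Fp, hp₀eq]; exact (hFp p₀ hp₀).1.2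
  refine ⟨h1, h2, ?_⟩
  intro p hp
  obtain ⟨w, hw, hwle⟩ := (hFp p hp).2
  have hs1le : sigma1 P ≤ Fp P p := csInf_le hGfin.bddBelow ⟨p, hp, rfl⟩
  exact ⟨w, hw, fun i => le_trans hs1le (hwle i)⟩

-- σ₂ machinery
lemma sigma2_facts (hN : 1 ≤ N) (hP : IsRootSystem P) (hEA : CondEA P) :
    1 ≤ sigma2 P ∧ ∀ (x : E N) (c : ℝ), 0 ≤ c → (∀ p ∈ P, |⟪p, x⟫| ≤ c) →
      ‖x‖ ≤ sigma2 P * c := by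
  haveI : Nonempty (Fin N) := ⟨⟨0, hN⟩⟩
  have hPf := hP.1
  have hspan := span_P_top hEA hN
  obtain ⟨w, hw, _⟩ := exists_basisIn_subset (subset_refl P) hspan
  -- the linear map x ↦ (⟪w i, x⟫)_i
  let L : E N →ₗ[ℝ] E N :=
    { toFun := fun x => WithLp.toLp 2 (fun i => ⟪w i, x⟫)
      map_add' := by intro x y; ext i; simp [inner_add_right]
      map_smul' := by intro c x; ext i; simp [real_inner_smul_right, Finset.mul_sum, mul_left_comm] }
  have hLzero : ∀ x : E N, (∀ i, ⟪w i, x⟫ = 0) → x = 0 := by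
    intro x hx
    have hxo : x ∈ (⊤ : Submodule ℝ (E N))ᗮ := by
      rw [← hw.2.2, Submodule.mem_orthogonal]
      intro u hu
      induction hu using Submodule.span_induction with
      | mem u hu => obtain ⟨i, rfl⟩ := hu; exact hx i
      | zero => simp
      | add u v _ _ hu hv => rw [inner_add_left, hu, hv]; simp
      | smul a u _ hu => rw [real_inner_smul_left, hu]; simp
    rw [Submodule.top_orthogonal_eq_bot] at hxo
    simpa using hxo
  have hLinj : Function.Injective L := by
    intro x y hxy
    have h0 : x - y = 0 := by
      apply hLzero
      intro i
      have h1 : ⟪w i, x⟫ = ⟪w i, y⟫ := congrArg (fun f : E N => f i) hxy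
      rw [inner_sub_right, h1, sub_self]
    rw [sub_eq_zero] at h0
    exact h0
  have hLsurj : Function.Surjective L := LinearMap.injective_iff_surjective.mp hLinj
  let e : E N ≃ₗ[ℝ] E N := LinearEquiv.ofBijective L ⟨hLinj, hLsurj⟩
  let g := LinearMap.toContinuousLinearMap (e.symm : E N →ₗ[ℝ] E N)
  have hbound : ∀ x : E N, ‖x‖ ≤ ‖g‖ * ‖L x‖ := by
    intro x
    have h1 : g (L x) = x := by
      show e.symm (L x) = x
      have : L x = e x := rfl
      rw [this, LinearEquiv.symm_apply_apply]
    calc ‖x‖ = ‖g (L x)‖ := by rw [h1]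
      _ ≤ ‖g‖ * ‖L x‖ := g.le_opNorm _
  have hLnorm : ∀ (x : E N) (c : ℝ), 0 ≤ c → (∀ i, |⟪w i, x⟫| ≤ c) →
      ‖L x‖ ≤ Real.sqrt N * c := by
    intro x c hc hxc
    have h1 : ‖L x‖ = Real.sqrt (∑ i, ‖⟪w i, x⟫‖ ^ 2) := EuclideanSpace.norm_eq (L x)
    have h2 : (∑ i, ‖⟪w i, x⟫‖ ^ 2) ≤ (N : ℝ) * c ^ 2 := by
      calc (∑ i, ‖⟪w i, x⟫‖ ^ 2) ≤ ∑ _i : Fin N, c ^ 2 := by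
            refine Finset.sum_le_sum fun i _ => ?_
            rw [Real.norm_eq_abs]
            exact pow_le_pow_left₀ (abs_nonneg _) (hxc i) 2
        _ = (N : ℝ) * c ^ 2 := by simp [Finset.card_univ, mul_comm]
    calc ‖L x‖ ≤ Real.sqrt ((N : ℝ) * c ^ 2) := by
          rw [h1]; exact Real.sqrt_le_sqrt h2
      _ = Real.sqrt N * c := by
          rw [Real.sqrt_mul (by positivity), Real.sqrt_sq hc]
  -- bddAbove of the σ₂ index set
  have hK : BddAbove {t | ∃ x : E N, (∀ p ∈ P, |⟪p, x⟫| ≤ 1) ∧ t = ‖x‖} := by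
    refine ⟨‖g‖ * (Real.sqrt N * 1), ?_⟩
    rintro t ⟨x, hx, rfl⟩
    calc ‖x‖ ≤ ‖g‖ * ‖L x‖ := hbound x
      _ ≤ ‖g‖ * (Real.sqrt N * 1) := by
          refine mul_le_mul_of_nonneg_left ?_ (norm_nonneg g)
          exact hLnorm x 1 zero_le_one (fun i => hx _ (hw.1 i))
  have hone : 1 ≤ sigma2 P := by
    have hp : w ⟨0, hN⟩ ∈ P := hw.1 _
    have hmem : (1 : ℝ) ∈ {t | ∃ x : E N, (∀ p ∈ P, |⟪p, x⟫| ≤ 1) ∧ t = ‖x‖} := by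
      refine ⟨w ⟨0, hN⟩, fun q hq => ?_, ?_⟩
      · have := abs_real_inner_le_norm q (w ⟨0, hN⟩)
        rw [hP.2.1 _ hq, hP.2.1 _ hp] at this
        simpa using this
      · rw [hP.2.1 _ hp]
    exact le_csSup hK hmem
  refine ⟨hone, ?_⟩
  intro x c hc hxc
  rcases eq_or_lt_of_le hc with hc0 | hc0
  · -- c = 0 : x = 0
    have hx0 : x = 0 := by
      apply hLzero
      intro i
      have := hxc _ (hw.1 i)
      rw [← hc0] at this
      exact abs_eq_zero.mp (le_antisymm this (abs_nonneg _))
    rw [hx0, norm_zero]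
    rw [← hc0, mul_zero]
  · -- c > 0
    have hx' : ∀ p ∈ P, |⟪p, c⁻¹ • x⟫| ≤ 1 := by
      intro p hp
      rw [real_inner_smul_right, abs_mul, abs_inv, abs_of_pos hc0]
      calc c⁻¹ * |⟪p, x⟫| ≤ c⁻¹ * c :=
            mul_le_mul_of_nonneg_left (hxc p hp) (inv_nonneg.mpr hc)
        _ = 1 := inv_mul_cancel₀ hc0.ne'
    have hle : ‖c⁻¹ • x‖ ≤ sigma2 P := le_csSup hK ⟨c⁻¹ • x, hx', rfl⟩
    have hnorm : ‖c⁻¹ • x‖ = c⁻¹ * ‖x‖ := by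
      rw [norm_smul, Real.norm_eq_abs, abs_inv, abs_of_pos hc0]
    rw [hnorm] at hle
    calc ‖x‖ = c * (c⁻¹ * ‖x‖) := by field_simp
      _ ≤ c * sigma2 P := mul_le_mul_of_nonneg_left hle hc
      _ = sigma2 P * c := mul_comm _ _

-- The key lemma: far-out points see a basis of P at large inner products
lemma exists_basis_large_inner (hN : 1 ≤ N) (hP : IsRootSystem P) (hEA : CondEA P)
    {x : E N} {d : ℝ} (hd : 0 < d)
    (hx : (sigma1 P)⁻¹ * sigma2 P * d ≤ ‖x‖) :
    ∃ v : Fin N → E N, BasisIn P v ∧ ∀ i, d ≤ ⟪x, v i⟫ := by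
  haveI : Nonempty (Fin N) := ⟨⟨0, hN⟩⟩
  obtain ⟨hσ1pos, hσ1le1, hadapted⟩ := sigma1_facts hN hP hEA
  obtain ⟨hσ2one, hσ2bound⟩ := sigma2_facts hN hP hEA
  have hσ2pos : 0 < sigma2 P := lt_of_lt_of_le one_pos hσ2one
  have hPf := hP.1
  have hPne : P.Nonempty := by
    obtain ⟨v₀, hv₀, _⟩ := exists_basisIn_subset (subset_refl P) (span_P_top hEA hN)
    exact ⟨v₀ ⟨0, hN⟩, hv₀.1 _⟩
  -- maximizer p₁
  obtain ⟨p₁, hp₁mem, hp₁max⟩ := hPf.toFinset.exists_max_image (fun p => ⟪x, p⟫)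
    (by rwa [Set.Finite.toFinset_nonempty])
  rw [Set.Finite.mem_toFinset] at hp₁mem
  have hp₁max' : ∀ p ∈ P, ⟪x, p⟫ ≤ ⟪x, p₁⟫ := by
    intro p hp
    exact hp₁max p (hPf.mem_toFinset.mpr hp)
  set c := ⟪x, p₁⟫ with hc
  have habs : ∀ p ∈ P, |⟪p, x⟫| ≤ c := by
    intro p hp
    rw [abs_le]
    constructor
    · have := hp₁max' _ (RS.neg_mem hP hp)
      rw [inner_neg_right] at this
      rw [real_inner_comm] at this
      linarith
    · rw [real_inner_comm]; exact hp₁max' p hp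
  have hcnn : 0 ≤ c := le_trans (abs_nonneg _) (habs p₁ hp₁mem)
  have hxc : ‖x‖ ≤ sigma2 P * c := hσ2bound x c hcnn habs
  -- d ≤ σ1 * c
  have hdc : d ≤ sigma1 P * c := by
    have h1 : (sigma1 P)⁻¹ * sigma2 P * d ≤ sigma2 P * c := le_trans hx hxc
    have h2 : (sigma1 P)⁻¹ * d ≤ c := by
      have := mul_le_mul_of_nonneg_left h1 (le_of_lt (inv_pos.mpr hσ2pos))
      calc (sigma1 P)⁻¹ * d = (sigma2 P)⁻¹ * ((sigma1 P)⁻¹ * sigma2 P * d) := by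
            field_simp
        _ ≤ (sigma2 P)⁻¹ * (sigma2 P * c) := this
        _ = c := by field_simp
    calc d = sigma1 P * ((sigma1 P)⁻¹ * d) := by field_simp
      _ ≤ sigma1 P * c := mul_le_mul_of_nonneg_left h2 (le_of_lt hσ1pos)
  set τ := sigma1 P * c with hτ
  have hτc : τ ≤ c := by
    calc τ = sigma1 P * c := rfl
      _ ≤ 1 * c := mul_le_mul_of_nonneg_right hσ1le1 hcnn
      _ = c := one_mul c
  have hcpos : 0 < c := by
    by_contra h
    push_neg at h
    have hc0 : c = 0 := le_antisymm h hcnn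
    have hτ0 : τ = 0 := by rw [hτ, hc0, mul_zero]
    linarith
  -- adapted basis
  obtain ⟨w, hwB, hwin⟩ := hadapted p₁ hp₁mem
  -- the good set S
  set S : Set (E N) := {q | q ∈ P ∧ τ ≤ ⟪x, q⟫} with hS
  have hSP : S ⊆ P := fun q hq => hq.1
  have hp₁S : p₁ ∈ S := ⟨hp₁mem, hτc⟩
  have hwspanS : ∀ i, w i ∈ Submodule.span ℝ S := by
    intro i
    set b := ⟪w i, p₁⟫ with hb
    have hbabs : sigma1 P ≤ |b| := hwin i
    set u := if 0 ≤ b then w i else -(w i) with hu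
    have huP : u ∈ P := by
      rw [hu]
      split_ifs
      · exact hwB.1 i
      · exact RS.neg_mem hP (hwB.1 i)
    have hub : ⟪u, p₁⟫ = |b| := by
      rw [hu]
      split_ifs with h
      · rw [abs_of_nonneg h, hb]
      · rw [inner_neg_left, abs_of_neg (not_le.mp h), hb]
    have hwu : u ∈ Submodule.span ℝ S → w i ∈ Submodule.span ℝ S := by
      intro h
      by_cases hbpos : 0 ≤ b
      · rwa [hu, if_pos hbpos] at h
      · rw [hu, if_neg hbpos] at h
        simpa using Submodule.neg_mem _ h
    apply hwu
    by_cases hcase : τ ≤ ⟪x, u⟫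
    · exact Submodule.subset_span ⟨huP, hcase⟩
    · push_neg at hcase
      set q := (2 * ⟪u, p₁⟫) • p₁ - u with hq
      have hqP : q ∈ P := RS.reflect_neg_mem hP hp₁mem huP
      have hqinner : τ ≤ ⟪x, q⟫ := by
        rw [hq, inner_sub_right, real_inner_smul_right]
        have h1 : 2 * sigma1 P * c ≤ 2 * ⟪u, p₁⟫ * c := by
          rw [hub]
          have := mul_le_mul_of_nonneg_right hbabs hcnn
          nlinarith
        have : ⟪x, p₁⟫ = c := rfl
        nlinarith [hcase]
      have hqS : q ∈ Submodule.span ℝ S := Submodule.subset_span ⟨hqP, hqinner⟩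
      have hp₁S' : p₁ ∈ Submodule.span ℝ S := Submodule.subset_span hp₁S
      have : u = (2 * ⟪u, p₁⟫) • p₁ - q := by rw [hq]; abel
      rw [this]
      exact Submodule.sub_mem _ (Submodule.smul_mem _ _ hp₁S') hqS
  have hspanS : Submodule.span ℝ S = ⊤ := by
    refine top_unique ?_
    rw [← hwB.2.2]
    rw [Submodule.span_le]
    rintro z ⟨i, rfl⟩
    exact hwspanS i
  obtain ⟨v, hvB, hvS⟩ := exists_basisIn_subset hSP hspanS
  refine ⟨v, hvB, fun i => ?_⟩
  exact le_trans hdc (hvS i).2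

-- segment and ray lemmas from the reflection property
variable {ρ : ℝ} {Ω : Set (E N)}

lemma seg_in (hP : IsRootSystem P) (hΩ : ReflProp P ρ Ω) {p : E N} (hp : p ∈ P)
    {z : E N} (hz : z ∈ Ω) {u : ℝ} (hu0 : 0 < u) (hu2 : u < 2 * (⟪z, p⟫ - ρ)) :
    z - u • p ∈ Ω := by
  set s := ⟪z, p⟫ - u / 2 with hs
  have hsρ : s > ρ := by rw [hs]; linarith
  have hrefl : reflect p s z = z - u • p := by
    rw [reflect, hs]
    congr 1
    congr 1
    ring
  have hnorm : ⟪p, p⟫ = (1 : ℝ) := by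
    have := real_inner_self_eq_norm_sq p
    rw [hP.2.1 p hp] at this
    simpa using this
  have hlt : ⟪z - u • p, p⟫ < s := by
    rw [inner_sub_left, real_inner_smul_left, hnorm, hs]
    linarith
  have hmem : z - u • p ∈ reflect p s '' Ω ∩ {x | ⟪x, p⟫ < s} :=
    ⟨⟨z, hz, hrefl⟩, hlt⟩
  exact (hΩ p hp s hsρ hmem).1

lemma ray_out (hP : IsRootSystem P) (hΩ : ReflProp P ρ Ω) {p : E N} (hp : p ∈ P)
    {z : E N} (hz : z ∉ Ω) (hzρ : ρ ≤ ⟪z, p⟫) {u : ℝ} (hu0 : 0 < u) :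
    z + u • p ∉ Ω := by
  intro hmem
  set s := ⟪z, p⟫ + u / 2 with hs
  have hsρ : s > ρ := by rw [hs]; linarith
  have hnorm : ⟪p, p⟫ = (1 : ℝ) := by
    have := real_inner_self_eq_norm_sq p
    rw [hP.2.1 p hp] at this
    simpa using this
  have hinner : ⟪z + u • p, p⟫ = ⟪z, p⟫ + u := by
    rw [inner_add_left, real_inner_smul_left, hnorm, mul_one]
  have hrefl : reflect p s (z + u • p) = z := by
    rw [reflect, hinner, hs]
    have h2 : 2 * (⟪z, p⟫ + u - (⟪z, p⟫ + u / 2)) = u := by ring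
    rw [h2]
    abel
  have hlt : ⟪z, p⟫ < s := by rw [hs]; linarith
  have : z ∈ Ω ∩ {x | ⟪x, p⟫ < s} :=
    hΩ p hp s hsρ ⟨⟨z + u • p, hmem, hrefl⟩, hlt⟩
  exact hz this.1

-- cone lemmas
lemma cone_in (hP : IsRootSystem P) (hΩ : ReflProp P ρ Ω) {v : Fin N → E N}
    (hv : ∀ i, v i ∈ P) {z : E N} (hz : z ∈ Ω) {a : Fin N → ℝ}
    (ha : ∀ i, 0 ≤ a i) (hinner : ∀ i, ρ + ∑ j, a j < ⟪z, v i⟫) :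
    z - ∑ i, a i • v i ∈ Ω := by
  suffices H : ∀ t : Finset (Fin N), z - ∑ i ∈ t, a i • v i ∈ Ω from H Finset.univ
  intro t
  induction t using Finset.induction_on with
  | empty => simpa using hz
  | @insert j t hj ih =>
    rw [Finset.sum_insert hj]
    have hsub : ∑ i ∈ t, a i ≤ ∑ i, a i - a j := by
      have h1 : ∑ i ∈ insert j t, a i ≤ ∑ i, a i :=
        Finset.sum_le_sum_of_subset_of_nonneg (Finset.subset_univ _)
          (fun i _ _ => ha i)
      rw [Finset.sum_insert hj] at h1
      linarith
    have hinnery : ⟪z - ∑ i ∈ t, a i • v i, v j⟫ ≥ ⟪z, v j⟫ - ∑ i ∈ t, a i := by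
      rw [inner_sub_left, sum_inner]
      have h1 : ∑ i ∈ t, ⟪a i • v i, v j⟫ ≤ ∑ i ∈ t, a i := by
        refine Finset.sum_le_sum fun i _ => ?_
        rw [real_inner_smul_left]
        have h2 : ⟪v i, v j⟫ ≤ 1 := by
          have := abs_real_inner_le_norm (v i) (v j)
          rw [hP.2.1 _ (hv i), hP.2.1 _ (hv j)] at this
          have := abs_le.mp (by simpa using this)
          exact this.2
        calc a i * ⟪v i, v j⟫ ≤ a i * 1 := mul_le_mul_of_nonneg_left h2 (ha i)
          _ = a i := mul_one _
      linarith
    rcases eq_or_lt_of_le (ha j) with haj | haj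
    · rw [← haj]
      simpa using ih
    · have key : a j < 2 * (⟪z - ∑ i ∈ t, a i • v i, v j⟫ - ρ) := by
        have h3 := hinner j
        have h4 : ρ + a j + ∑ i ∈ t, a i ≤ ρ + ∑ i, a i := by linarith
        nlinarith [hinnery]
      have := seg_in hP hΩ (hv j) ih haj key
      have heq : z - ∑ i ∈ t, a i • v i - a j • v j
          = z - (a j • v j + ∑ i ∈ t, a i • v i) := by abel
      rwa [heq] at this

lemma cone_out (hP : IsRootSystem P) (hΩ : ReflProp P ρ Ω) {v : Fin N → E N}
    (hv : ∀ i, v i ∈ P) {z : E N} (hz : z ∉ Ω) {a : Fin N → ℝ}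
    (ha : ∀ i, 0 ≤ a i) (hinner : ∀ i, ρ + ∑ j, a j ≤ ⟪z, v i⟫) :
    z + ∑ i, a i • v i ∉ Ω := by
  suffices H : ∀ t : Finset (Fin N), z + ∑ i ∈ t, a i • v i ∉ Ω from H Finset.univ
  intro t
  induction t using Finset.induction_on with
  | empty => simpa using hz
  | @insert j t hj ih =>
    rw [Finset.sum_insert hj]
    have hsub : ∑ i ∈ t, a i ≤ ∑ i, a i := by
      refine Finset.sum_le_sum_of_subset_of_nonneg (Finset.subset_univ _)
        (fun i _ _ => ha i)
    have hinnery : ⟪z + ∑ i ∈ t, a i • v i, v j⟫ ≥ ⟪z, v j⟫ - ∑ i ∈ t, a i := by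
      rw [inner_add_left, sum_inner]
      have h1 : ∑ i ∈ t, (-(a i)) ≤ ∑ i ∈ t, ⟪a i • v i, v j⟫ := by
        refine Finset.sum_le_sum fun i _ => ?_
        rw [real_inner_smul_left]
        have h2 : -1 ≤ ⟪v i, v j⟫ := by
          have := abs_real_inner_le_norm (v i) (v j)
          rw [hP.2.1 _ (hv i), hP.2.1 _ (hv j)] at this
          have := abs_le.mp (by simpa using this)
          exact this.1
        nlinarith [ha i]
      rw [Finset.sum_neg_distrib] at h1
      linarith
    rcases eq_or_lt_of_le (ha j) with haj | haj
    · rw [← haj]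
      simpa using ih
    · have hne : ρ ≤ ⟪z + ∑ i ∈ t, a i • v i, v j⟫ := by
        have h3 := hinner j
        have h4 : (0:ℝ) ≤ ∑ i ∈ t, a i := Finset.sum_nonneg fun i _ => ha i
        nlinarith [hinnery]
      have := ray_out hP hΩ (hv j) ih hne haj
      have heq : z + ∑ i ∈ t, a i • v i + a j • v j
          = z + (a j • v j + ∑ i ∈ t, a i • v i) := by abel
      rwa [heq] at this

-- σ₃ machinery
lemma cone_subset_ball (hP : IsRootSystem P) {v : Fin N → E N} (hv : ∀ i, v i ∈ P)
    (t : ℝ) : Cone t v ⊆ ball 0 t := by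
  rintro x ⟨a, hpos, hsum, rfl⟩
  rw [mem_ball_zero_iff]
  calc ‖∑ i, a i • v i‖ ≤ ∑ i, ‖a i • v i‖ := norm_sum_le _ _
    _ = ∑ i, a i := by
        refine Finset.sum_congr rfl fun i _ => ?_
        rw [norm_smul, Real.norm_eq_abs, abs_of_pos (hpos i), hP.2.1 _ (hv i), mul_one]
    _ < t := hsum

lemma sigma3_facts (hN : 1 ≤ N) (hP : IsRootSystem P) (hEA : CondEA P) :
    0 ≤ sigma3 P ∧ sigma3 P ≤ 1 ∧
      ∀ v : Fin N → E N, BasisIn P v →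
        ball ((1 / (2 * (N : ℝ))) • ∑ i, v i) (sigma3 P) ⊆ Cone 1 v := by
  haveI : Nonempty (Fin N) := ⟨⟨0, hN⟩⟩
  have hNR : (0 : ℝ) < N := by exact_mod_cast hN
  have main : ∀ v : Fin N → E N, BasisIn P v →
      (0 < sSup {r | 0 < r ∧ ball ((1 / (2 * (N : ℝ))) • ∑ i, v i) r ⊆ Cone 1 v} ∧
       sSup {r | 0 < r ∧ ball ((1 / (2 * (N : ℝ))) • ∑ i, v i) r ⊆ Cone 1 v} ≤ 1 ∧
       ball ((1 / (2 * (N : ℝ))) • ∑ i, v i)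
         (sSup {r | 0 < r ∧ ball ((1 / (2 * (N : ℝ))) • ∑ i, v i) r ⊆ Cone 1 v})
         ⊆ Cone 1 v) := by
    intro v hv
    set c₀ : E N := (1 / (2 * (N : ℝ))) • ∑ i, v i with hc₀
    set Sv := {r | 0 < r ∧ ball c₀ r ⊆ Cone 1 v} with hSv
    have hc₀smul : c₀ = ∑ i, (1 / (2 * (N : ℝ))) • v i := by
      rw [hc₀, Finset.smul_sum]
    have hc₀mem : c₀ ∈ Cone 1 v := by
      refine ⟨fun _ => 1 / (2 * (N : ℝ)), fun i => by positivity, ?_, hc₀smul⟩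
      rw [Finset.sum_const, Finset.card_univ, Fintype.card_fin, nsmul_eq_mul]
      rw [show (N : ℝ) * (1 / (2 * (N : ℝ))) = 1 / 2 by field_simp]
      norm_num
    -- openness of the cone
    have hopen : IsOpen (Cone 1 v) := by
      let b : Module.Basis (Fin N) ℝ (E N) := Module.Basis.mk hv.2.1 (by rw [hv.2.2])
      have hbv : ∀ i, b i = v i := fun i => Module.Basis.mk_apply _ _ i
      have hcone_eq : Cone 1 v =
          ⇑b.equivFun ⁻¹' {a : Fin N → ℝ | (∀ i, 0 < a i) ∧ ∑ i, a i < 1} := by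
        ext x
        constructor
        · rintro ⟨a, h1, h2, rfl⟩
          have hxa : (∑ i, a i • v i) = b.equivFun.symm a := by
            rw [Module.Basis.equivFun_symm_apply]
            exact Finset.sum_congr rfl fun i _ => by rw [hbv]
          rw [Set.mem_preimage, hxa, LinearEquiv.apply_symm_apply]
          exact ⟨h1, h2⟩
        · intro hx
          refine ⟨b.equivFun x, hx.1, hx.2, ?_⟩
          conv_lhs => rw [← b.equivFun.symm_apply_apply x]
          rw [Module.Basis.equivFun_symm_apply]
          exact Finset.sum_congr rfl fun i _ => by rw [hbv]
      rw [hcone_eq]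
      have hcont : Continuous ⇑b.equivFun :=
        LinearMap.continuous_of_finiteDimensional (b.equivFun : E N →ₗ[ℝ] (Fin N → ℝ))
      refine IsOpen.preimage hcont ?_
      have heq : {a : Fin N → ℝ | (∀ i, 0 < a i) ∧ ∑ i, a i < 1}
          = (⋂ i, {a : Fin N → ℝ | 0 < a i}) ∩ {a : Fin N → ℝ | ∑ i, a i < 1} := by
        ext a; simp
      rw [heq]
      refine IsOpen.inter (isOpen_iInter_of_finite fun i => ?_) ?_
      · exact isOpen_lt continuous_const (continuous_apply i)
      · exact isOpen_lt (continuous_finset_sum _ fun i _ => continuous_apply i)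
          continuous_const
    have hSvne : Sv.Nonempty := by
      obtain ⟨ε, hε, hsub⟩ := Metric.isOpen_iff.mp hopen c₀ hc₀mem
      exact ⟨ε, hε, hsub⟩
    -- ‖c₀‖ ≤ 1/2
    have hc₀norm : ‖c₀‖ ≤ 1 / 2 := by
      rw [hc₀, norm_smul, Real.norm_eq_abs, abs_of_pos (by positivity)]
      calc 1 / (2 * (N : ℝ)) * ‖∑ i, v i‖ ≤ 1 / (2 * (N : ℝ)) * ∑ i, ‖v i‖ := by
            exact mul_le_mul_of_nonneg_left (norm_sum_le _ _) (by positivity)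
        _ = 1 / (2 * (N : ℝ)) * (N : ℝ) := by
            congr 1
            rw [Finset.sum_congr rfl fun i _ => hP.2.1 _ (hv.1 i)]
            rw [Finset.sum_const, Finset.card_univ, Fintype.card_fin, nsmul_eq_mul, mul_one]
        _ = 1 / 2 := by field_simp
    have hc₀ne : c₀ ≠ 0 := by
      intro h
      have h1 := (Fintype.linearIndependent_iff.mp hv.2.1)
        (fun _ => 1 / (2 * (N : ℝ))) (by rw [← hc₀smul, h]) ⟨0, hN⟩
      have : (0:ℝ) < 1 / (2 * (N : ℝ)) := by positivity
      rw [h1] at this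
      exact lt_irrefl _ this
    have hc₀pos : 0 < ‖c₀‖ := norm_pos_iff.mpr hc₀ne
    -- every element of Sv is at most 1 - ‖c₀‖
    have hSvle : ∀ r ∈ Sv, r ≤ 1 - ‖c₀‖ := by
      rintro r ⟨hr0, hrsub⟩
      by_contra h
      push_neg at h
      set δ := (r + ‖c₀‖ - 1) / 2 with hδ
      have hδ0 : 0 < δ := by rw [hδ]; linarith
      have hδr : δ < r := by rw [hδ]; linarith [hc₀norm]
      set y := c₀ + (r - δ) • (‖c₀‖⁻¹ • c₀) with hy
      have hymem : y ∈ ball c₀ r := by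
        rw [mem_ball, dist_eq_norm, hy]
        have : c₀ + (r - δ) • ‖c₀‖⁻¹ • c₀ - c₀ = (r - δ) • ‖c₀‖⁻¹ • c₀ := by abel
        rw [this, norm_smul, norm_smul, Real.norm_eq_abs, Real.norm_eq_abs,
          abs_of_pos (by linarith : (0:ℝ) < r - δ), abs_of_pos (inv_pos.mpr hc₀pos),
          inv_mul_cancel₀ hc₀pos.ne', mul_one]
        linarith
      have hy1 : ‖y‖ < 1 := by
        have := cone_subset_ball hP hv.1 1 (hrsub hymem)
        rwa [mem_ball_zero_iff] at this
      have hynorm : ‖y‖ = ‖c₀‖ + (r - δ) := by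
        rw [hy]
        have heq : c₀ + (r - δ) • ‖c₀‖⁻¹ • c₀ = (1 + (r - δ) * ‖c₀‖⁻¹) • c₀ := by
          rw [add_smul, one_smul, smul_smul]
        have h5 : (0:ℝ) < 1 + (r - δ) * ‖c₀‖⁻¹ := by
          have h6 : 0 < (r - δ) * ‖c₀‖⁻¹ := mul_pos (by linarith) (inv_pos.mpr hc₀pos)
          linarith
        rw [heq, norm_smul, Real.norm_eq_abs, abs_of_pos h5, add_mul,
          one_mul, mul_assoc, inv_mul_cancel₀ hc₀pos.ne', mul_one]
      rw [hynorm] at hy1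
      rw [hδ] at hy1
      linarith
    have hSvbdd : BddAbove Sv := ⟨1 - ‖c₀‖, fun r hr => hSvle r hr⟩
    have hSvne2 := hSvne
    obtain ⟨ε, hε0, hεsub⟩ := hSvne2
    refine ⟨lt_of_lt_of_le hε0 (le_csSup hSvbdd ⟨hε0, hεsub⟩), ?_, ?_⟩
    · calc sSup Sv ≤ 1 - ‖c₀‖ := csSup_le hSvne hSvle
        _ ≤ 1 := by linarith [norm_nonneg c₀]
    · intro y hy
      rw [mem_ball, dist_eq_norm] at hy
      obtain ⟨r, hrSv, hr⟩ := exists_lt_of_lt_csSup hSvne hy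
      exact hrSv.2 (by rw [mem_ball, dist_eq_norm]; exact hr)
  -- conclusions about sigma3
  have hspan := span_P_top hEA hN
  obtain ⟨v₀, hv₀, _⟩ := exists_basisIn_subset (subset_refl P) hspan
  have houter_ne : {s | ∃ v : Fin N → E N, BasisIn P v ∧
      s = sSup {r | 0 < r ∧ ball ((1 / (2 * (N : ℝ))) • ∑ i, v i) r ⊆ Cone 1 v}}.Nonempty :=
    ⟨_, v₀, hv₀, rfl⟩
  have houter_bdd : BddBelow {s | ∃ v : Fin N → E N, BasisIn P v ∧
      s = sSup {r | 0 < r ∧ ball ((1 / (2 * (N : ℝ))) • ∑ i, v i) r ⊆ Cone 1 v}} := by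
    refine ⟨0, ?_⟩
    rintro s ⟨v, hv, rfl⟩
    exact le_of_lt (main v hv).1
  have h0 : 0 ≤ sigma3 P := by
    rw [sigma3]
    refine le_csInf houter_ne ?_
    rintro s ⟨v, hv, rfl⟩
    exact le_of_lt (main v hv).1
  have hle : ∀ v : Fin N → E N, BasisIn P v → sigma3 P ≤
      sSup {r | 0 < r ∧ ball ((1 / (2 * (N : ℝ))) • ∑ i, v i) r ⊆ Cone 1 v} := by
    intro v hv
    exact csInf_le houter_bdd ⟨v, hv, rfl⟩
  refine ⟨h0, le_trans (hle v₀ hv₀) (main v₀ hv₀).2.1, ?_⟩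
  intro v hv y hy
  refine (main v hv).2.2 ?_
  rw [mem_ball] at hy ⊢
  exact lt_of_lt_of_le hy (hle v hv)

lemma ball_subset_cone_scaled (hN : 1 ≤ N) (hP : IsRootSystem P) (hEA : CondEA P)
    {v : Fin N → E N} (hv : BasisIn P v) {t : ℝ} (ht : 0 < t) :
    ball (t • ((1 / (2 * (N : ℝ))) • ∑ i, v i)) (t * sigma3 P) ⊆ Cone t v := by
  intro w hw
  obtain ⟨-, -, hball⟩ := sigma3_facts hN hP hEA
  have h1 : t⁻¹ • w ∈ ball ((1 / (2 * (N : ℝ))) • ∑ i, v i) (sigma3 P) := by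
    rw [mem_ball, dist_eq_norm] at hw ⊢
    have heq : t⁻¹ • w - (1 / (2 * (N : ℝ))) • ∑ i, v i
        = t⁻¹ • (w - t • ((1 / (2 * (N : ℝ))) • ∑ i, v i)) := by
      rw [smul_sub, smul_smul, inv_mul_cancel₀ ht.ne', one_smul]
    rw [heq, norm_smul, Real.norm_eq_abs, abs_inv, abs_of_pos ht]
    calc t⁻¹ * ‖w - t • ((1 / (2 * (N : ℝ))) • ∑ i, v i)‖ < t⁻¹ * (t * sigma3 P) :=
          mul_lt_mul_of_pos_left hw (inv_pos.mpr ht)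
      _ = sigma3 P := by field_simp
  obtain ⟨a, hpos, hsum, heq⟩ := hball v hv h1
  refine ⟨fun i => t * a i, fun i => mul_pos ht (hpos i), ?_, ?_⟩
  · rw [← Finset.mul_sum]
    calc t * ∑ i, a i < t * 1 := mul_lt_mul_of_pos_left hsum ht
      _ = t := mul_one t
  · calc w = t • (t⁻¹ • w) := by rw [smul_smul, mul_inv_cancel₀ ht.ne', one_smul]
      _ = t • ∑ i, a i • v i := by rw [← heq]
      _ = ∑ i, (t * a i) • v i := by
          rw [Finset.smul_sum]
          exact Finset.sum_congr rfl fun i _ => by rw [smul_smul]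

/-- `(r, σ₃(P)^N)`-uniform density for sets with the reflection
property containing `𝔅_r`. -/
theorem uniform_density (N : ℕ) (hN : 1 ≤ N) (P : Set (E N))
    (hP : IsRootSystem P) (hEA : CondEA P) (ρ r : ℝ) (hρ : 0 ≤ ρ) (hr : 0 < r)
    (Ω : Set (E N)) (hopen : IsOpen Ω) (hΩ : ReflProp P ρ Ω)
    (hball : ball (0 : E N) ((sigma1 P)⁻¹ * sigma2 P * (ρ + 2 * r)) ⊆ Ω)
    (x : E N) (hx : x ∈ frontier Ω) (s : ℝ) (hs0 : 0 < s) (hsr : s < r) :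
    ENNReal.ofReal (sigma3 P ^ N) ≤ volume (ball x s ∩ Ω) / volume (ball x s) ∧
    volume (ball x s ∩ Ω) / volume (ball x s) ≤ ENNReal.ofReal (1 - sigma3 P ^ N) := by
  haveI : Nonempty (Fin N) := ⟨⟨0, hN⟩⟩
  haveI : Nontrivial (E N) := by
    refine ⟨EuclideanSpace.single (⟨0, hN⟩ : Fin N) (1 : ℝ), 0, ?_⟩
    intro h
    have := congrArg (fun f : E N => f ⟨0, hN⟩) h
    simp [EuclideanSpace.single_apply] at this
  have hfr := hx
  rw [IsOpen.frontier_eq hopen, Set.mem_diff] at hfr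
  obtain ⟨hxcl, hxout⟩ := hfr
  have hd : 0 < ρ + 2 * r := by linarith
  have hnx : (sigma1 P)⁻¹ * sigma2 P * (ρ + 2 * r) ≤ ‖x‖ := by
    by_contra h
    push_neg at h
    exact hxout (hball (mem_ball_zero_iff.mpr h))
  obtain ⟨v, hv, hvinner⟩ := exists_basis_large_inner hN hP hEA hd hnx
  obtain ⟨hσ30, hσ31, _⟩ := sigma3_facts hN hP hEA
  set c₀ : E N := (1 / (2 * (N : ℝ))) • ∑ i, v i with hc₀
  set v₁ := volume (ball (0 : E N) 1) with hv₁
  have hvolB : volume (ball x s) = ENNReal.ofReal (s ^ N) * v₁ := by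
    rw [Measure.addHaar_ball volume x hs0.le, finrank_euclideanSpace_fin]
  have hBne : volume (ball x s) ≠ 0 := (measure_ball_pos volume x hs0).ne'
  have hBfin : volume (ball x s) ≠ ⊤ := measure_ball_lt_top.ne
  have hσ3N1 : sigma3 P ^ N ≤ 1 := pow_le_one₀ hσ30 hσ31
  have hv₁fin : v₁ ≠ ⊤ := by rw [hv₁]; exact measure_ball_lt_top.ne
  -- UPPER cone
  have hupper : ball (x + s • c₀) (s * sigma3 P) ⊆ ball x s \ Ω := by
    intro w hw
    have hw' : w - x ∈ ball (s • c₀) (s * sigma3 P) := by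
      rw [mem_ball, dist_eq_norm] at hw ⊢
      have heq : w - x - s • c₀ = w - (x + s • c₀) := by abel
      rw [heq]; exact hw
    have hcone : w - x ∈ Cone s v := ball_subset_cone_scaled hN hP hEA hv hs0 hw'
    obtain ⟨a, hapos, hasum, haeq⟩ := hcone
    have hwx : w = x + ∑ i, a i • v i := by rw [← haeq]; abel
    refine ⟨?_, ?_⟩
    · rw [mem_ball, dist_eq_norm]
      have h2 := cone_subset_ball hP hv.1 s ⟨a, hapos, hasum, haeq⟩
      rwa [mem_ball_zero_iff] at h2
    · have hinner2 : ∀ i, ρ + ∑ j, a j ≤ ⟪x, v i⟫ := by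
        intro i
        have h5 := hvinner i
        linarith
      have hout := cone_out hP hΩ hv.1 hxout (fun i => (hapos i).le) hinner2
      rw [hwx]
      exact hout
  -- LOWER cones
  have hlow : ∀ t : ℝ, 0 < t → t < s →
      ENNReal.ofReal ((t * sigma3 P) ^ N) * v₁ ≤ volume (ball x s ∩ Ω) := by
    intro t ht hts
    obtain ⟨y, hyΩ, hyd⟩ : ∃ y ∈ Ω, dist x y < s - t :=
      Metric.mem_closure_iff.mp hxcl (s - t) (by linarith)
    have hyx : ‖y - x‖ < s - t := by
      rw [← dist_eq_norm, dist_comm]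
      exact hyd
    have hsub : ball (y - t • c₀) (t * sigma3 P) ⊆ ball x s ∩ Ω := by
      intro w hw
      have hw' : y - w ∈ ball (t • c₀) (t * sigma3 P) := by
        rw [mem_ball, dist_eq_norm] at hw ⊢
        have heq : y - w - t • c₀ = -(w - (y - t • c₀)) := by abel
        rw [heq, norm_neg]; exact hw
      have hcone : y - w ∈ Cone t v := ball_subset_cone_scaled hN hP hEA hv ht hw'
      obtain ⟨a, hapos, hasum, haeq⟩ := hcone
      have hwy : w = y - ∑ i, a i • v i := by rw [← haeq]; abel
      have h2 : ‖y - w‖ < t := by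
        have := cone_subset_ball hP hv.1 t ⟨a, hapos, hasum, haeq⟩
        rwa [mem_ball_zero_iff] at this
      refine ⟨?_, ?_⟩
      · rw [mem_ball, dist_eq_norm]
        calc ‖w - x‖ = ‖-(y - w) + (y - x)‖ := by
              congr 1
              abel
          _ ≤ ‖-(y - w)‖ + ‖y - x‖ := norm_add_le _ _
          _ = ‖y - w‖ + ‖y - x‖ := by rw [norm_neg]
          _ < t + (s - t) := by linarith
          _ = s := by ring
      · rw [hwy]
        refine cone_in hP hΩ hv.1 hyΩ (fun i => (hapos i).le) ?_
        intro i
        have h3 : |⟪y - x, v i⟫| ≤ ‖y - x‖ := by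
          have := abs_real_inner_le_norm (y - x) (v i)
          rwa [hP.2.1 _ (hv.1 i), mul_one] at this
        have h4 : ⟪x, v i⟫ + ⟪y - x, v i⟫ = ⟪y, v i⟫ := by
          rw [← inner_add_left]
          congr 1
          abel
        have h5 := hvinner i
        have h6 := (abs_le.mp h3).1
        linarith
    calc ENNReal.ofReal ((t * sigma3 P) ^ N) * v₁
        = volume (ball (y - t • c₀) (t * sigma3 P)) := by
          rw [Measure.addHaar_ball volume _ (mul_nonneg ht.le hσ30),
            finrank_euclideanSpace_fin]
      _ ≤ volume (ball x s ∩ Ω) := measure_mono hsub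
  -- pass to the limit t → s
  have hseq : Filter.Tendsto
      (fun n : ℕ => ENNReal.ofReal (((s - s / ((n : ℝ) + 2)) * sigma3 P) ^ N) * v₁)
      Filter.atTop (nhds (ENNReal.ofReal ((s * sigma3 P) ^ N) * v₁)) := by
    have h1 : Filter.Tendsto (fun n : ℕ => ((n : ℝ) + 2)) Filter.atTop Filter.atTop :=
      Filter.tendsto_atTop_add_const_right _ 2 tendsto_natCast_atTop_atTop
    have h2 : Filter.Tendsto (fun n : ℕ => s / ((n : ℝ) + 2)) Filter.atTop (nhds 0) := by
      have := h1.inv_tendsto_atTop.const_mul s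
      simpa [div_eq_mul_inv] using this
    have h3 : Filter.Tendsto (fun n : ℕ => (s - s / ((n : ℝ) + 2)) * sigma3 P)
        Filter.atTop (nhds (s * sigma3 P)) := by
      have hconst : Filter.Tendsto (fun _ : ℕ => s) Filter.atTop (nhds s) :=
        tendsto_const_nhds
      have := (hconst.sub h2).mul_const (sigma3 P)
      simpa using this
    exact ENNReal.Tendsto.mul_const (ENNReal.tendsto_ofReal (h3.pow N)) (Or.inr hv₁fin)
  have hlow' : ENNReal.ofReal ((s * sigma3 P) ^ N) * v₁ ≤ volume (ball x s ∩ Ω) := by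
    refine le_of_tendsto' hseq ?_
    intro n
    have hpos : 0 < s / ((n : ℝ) + 2) := by positivity
    have hlt : s / ((n : ℝ) + 2) < s := by
      rw [div_lt_iff₀ (by positivity)]
      nlinarith
    exact hlow _ (by linarith) (by linarith)
  have hof : ENNReal.ofReal ((s * sigma3 P) ^ N)
      = ENNReal.ofReal (sigma3 P ^ N) * ENNReal.ofReal (s ^ N) := by
    have heq : (s * sigma3 P) ^ N = sigma3 P ^ N * s ^ N := by
      rw [mul_pow]; ring
    rw [heq, ENNReal.ofReal_mul (pow_nonneg hσ30 N)]
  constructor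
  · rw [ENNReal.le_div_iff_mul_le (Or.inl hBne) (Or.inl hBfin)]
    calc ENNReal.ofReal (sigma3 P ^ N) * volume (ball x s)
        = ENNReal.ofReal ((s * sigma3 P) ^ N) * v₁ := by rw [hvolB, hof, mul_assoc]
      _ ≤ volume (ball x s ∩ Ω) := hlow'
  · rw [ENNReal.div_le_iff_le_mul (Or.inl hBne) (Or.inl hBfin)]
    have hsplit : volume (ball x s ∩ Ω) + volume (ball x s \ Ω) = volume (ball x s) :=
      measure_inter_add_diff (μ := volume) (ball x s) hopen.measurableSet
    have hD : ENNReal.ofReal ((s * sigma3 P) ^ N) * v₁ ≤ volume (ball x s \ Ω) := by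
      calc ENNReal.ofReal ((s * sigma3 P) ^ N) * v₁
          = volume (ball (x + s • c₀) (s * sigma3 P)) := by
            rw [Measure.addHaar_ball volume _ (mul_nonneg hs0.le hσ30),
              finrank_euclideanSpace_fin]
        _ ≤ volume (ball x s \ Ω) := measure_mono hupper
    have hsum : volume (ball x s) = ENNReal.ofReal ((1 - sigma3 P ^ N) * s ^ N) * v₁
        + ENNReal.ofReal ((s * sigma3 P) ^ N) * v₁ := by
      rw [hvolB, ← add_mul, ← ENNReal.ofReal_add
        (mul_nonneg (by linarith) (pow_nonneg hs0.le N))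
        (pow_nonneg (mul_nonneg hs0.le hσ30) N)]
      congr 2
      rw [mul_pow]
      ring
    have hA : volume (ball x s ∩ Ω) + ENNReal.ofReal ((s * sigma3 P) ^ N) * v₁
        ≤ volume (ball x s) := by
      calc volume (ball x s ∩ Ω) + ENNReal.ofReal ((s * sigma3 P) ^ N) * v₁
          ≤ volume (ball x s ∩ Ω) + volume (ball x s \ Ω) := add_le_add le_rfl hD
        _ = volume (ball x s) := hsplit
    have hDfin : ENNReal.ofReal ((s * sigma3 P) ^ N) * v₁ ≠ ⊤ :=
      ENNReal.mul_ne_top ENNReal.ofReal_ne_top hv₁fin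
    have hstep : volume (ball x s ∩ Ω)
        ≤ ENNReal.ofReal ((1 - sigma3 P ^ N) * s ^ N) * v₁ := by
      rw [← ENNReal.add_le_add_iff_right hDfin]
      calc volume (ball x s ∩ Ω) + ENNReal.ofReal ((s * sigma3 P) ^ N) * v₁
          ≤ volume (ball x s) := hA
        _ = ENNReal.ofReal ((1 - sigma3 P ^ N) * s ^ N) * v₁
            + ENNReal.ofReal ((s * sigma3 P) ^ N) * v₁ := hsum
    calc volume (ball x s ∩ Ω) ≤ ENNReal.ofReal ((1 - sigma3 P ^ N) * s ^ N) * v₁ := hstep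
      _ = ENNReal.ofReal (1 - sigma3 P ^ N) * volume (ball x s) := by
          rw [hvolB, ENNReal.ofReal_mul (by linarith), mul_assoc]
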